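/- Let x₁, ..., x_n ∈ ℤ[ω] satisfy x̄₁x₁ + ⋯ + x̄ₙxₙ ≡ 0 (mod 2), where x̄ denotes complex conjugation. Then the number of indices j with x̄_j x_j ≡ 1 (mod 2) is even, and the number of indices j with x̄_j x_j ≡ ω + ω³ (mod 2) is even. -/
import Mathlib


noncomputable section

/-- The eighth root of unity `ω = e^{iπ/4} = (1+i)/√2`. -/
def ω : ℂ := (1 + Complex.I) / Real.sqrt 2

/-- A rational number is dyadic if it has the form `a / 2^n` with `a ∈ ℤ`, `n ∈ ℕ`. -/
def IsDyadic (q : ℚ) : Prop := ∃ (a : ℤ) (n : ℕ), q = a / 2 ^ n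

/-- Membership in the ring `𝔻[ω] = ℤ[1/√2, i]`: complex numbers of the form
`aω³ + bω² + cω + d` with `a, b, c, d` dyadic rationals. -/
def inDω (t : ℂ) : Prop :=
  ∃ a b c d : ℚ, IsDyadic a ∧ IsDyadic b ∧ IsDyadic c ∧ IsDyadic d ∧
    t = (a : ℂ) * ω ^ 3 + (b : ℂ) * ω ^ 2 + (c : ℂ) * ω + (d : ℂ)

/-- Membership in the ring `ℤ[ω]`: complex numbers of the form
`aω³ + bω² + cω + d` with `a, b, c, d ∈ ℤ`. -/
def inZω (t : ℂ) : Prop :=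
  ∃ a b c d : ℤ, t = (a : ℂ) * ω ^ 3 + (b : ℂ) * ω ^ 2 + (c : ℂ) * ω + (d : ℂ)

lemma sqrt2_ne : ((Real.sqrt 2 : ℝ) : ℂ) ≠ 0 := by
  norm_cast; positivity

lemma sqrt2_sq : ((Real.sqrt 2 : ℝ) : ℂ) ^ 2 = 2 := by
  norm_cast
  rw [Real.sq_sqrt] <;> norm_num

lemma omega_sq : ω ^ 2 = Complex.I := by
  rw [ω, div_pow]
  rw [show (1 + Complex.I)^2 = 2 * Complex.I by ring_nf; rw [Complex.I_sq]; ring]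
  rw [sqrt2_sq]
  field_simp

lemma omega_pow4 : ω ^ 4 = -1 := by
  rw [show (4:ℕ) = 2*2 by norm_num, pow_mul, omega_sq, Complex.I_sq]

lemma sqrt2_mul_omega : ((Real.sqrt 2 : ℝ) : ℂ) * ω = 1 + Complex.I := by
  rw [ω]; field_simp

lemma sqrt2_mul_omega3 : ((Real.sqrt 2 : ℝ) : ℂ) * ω ^ 3 = -1 + Complex.I := by
  linear_combination (((Real.sqrt 2 : ℝ) : ℂ) * ω) * omega_sq +
    Complex.I * sqrt2_mul_omega + Complex.I_sq

lemma conj_omega : (starRingEnd ℂ) ω = -ω ^ 3 := by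
  have h : ((Real.sqrt 2 : ℝ) : ℂ) * ((starRingEnd ℂ) ω + ω ^ 3) = 0 := by
    rw [mul_add, sqrt2_mul_omega3]
    rw [show ((Real.sqrt 2 : ℝ) : ℂ) * (starRingEnd ℂ) ω
        = (starRingEnd ℂ) (((Real.sqrt 2 : ℝ) : ℂ) * ω) by
      rw [map_mul, Complex.conj_ofReal]]
    rw [sqrt2_mul_omega]
    simp [Complex.ext_iff]
  have := mul_eq_zero.mp h
  rcases this with h' | h'
  · exact absurd h' sqrt2_ne
  · linear_combination h'

lemma rat_sqrt2 (q r : ℚ) (h : (q : ℝ) + (r : ℝ) * Real.sqrt 2 = 0) : q = 0 ∧ r = 0 := by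
  by_cases hr : r = 0
  · subst hr; simp at h; exact ⟨by exact_mod_cast h, rfl⟩
  · exfalso
    have h2 : Real.sqrt 2 = ((-q/r : ℚ) : ℝ) := by
      push_cast
      field_simp
      nlinarith [h]
    have : Irrational ((-q/r : ℚ) : ℝ) := h2 ▸ irrational_sqrt_two
    exact (Rat.not_irrational _) this

lemma lin_indep (a b c d : ℚ) (h : (a:ℂ) * ω^3 + (b:ℂ) * ω^2 + (c:ℂ) * ω + (d:ℂ) = 0) :
    a = 0 ∧ b = 0 ∧ c = 0 ∧ d = 0 := by
  have key : ((((c:ℝ) - a) + (d:ℝ) * Real.sqrt 2 : ℝ) : ℂ)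
      + ((((a:ℝ) + c) + (b:ℝ) * Real.sqrt 2 : ℝ) : ℂ) * Complex.I = 0 := by
    push_cast
    linear_combination ((Real.sqrt 2 : ℝ) : ℂ) * h - (a:ℂ) * sqrt2_mul_omega3
      - (c:ℂ) * sqrt2_mul_omega - ((b:ℂ) * ((Real.sqrt 2 : ℝ) : ℂ)) * omega_sq
  rw [Complex.ext_iff] at key
  simp at key
  obtain ⟨k1, k2⟩ := key
  have e1 : ((c - a : ℚ) : ℝ) + ((d:ℚ) : ℝ) * Real.sqrt 2 = 0 := by push_cast; linarith
  have e2 : ((a + c : ℚ) : ℝ) + ((b:ℚ) : ℝ) * Real.sqrt 2 = 0 := by push_cast; linarith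
  obtain ⟨p1, p2⟩ := rat_sqrt2 _ _ e1
  obtain ⟨q1, q2⟩ := rat_sqrt2 _ _ e2
  constructor
  · linarith [sub_eq_zero.mp (by linarith [p1] : c - a = 0)]
  refine ⟨q2, ?_, p2⟩
  linarith [p1, q1]

lemma decode_iff (A B C D : ℤ) :
    inZω (((A:ℂ) * ω^3 + (B:ℂ) * ω^2 + (C:ℂ) * ω + (D:ℂ)) / 2) ↔
      2 ∣ A ∧ 2 ∣ B ∧ 2 ∣ C ∧ 2 ∣ D := by
  constructor
  · rintro ⟨a, b, c, d, he⟩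
    have h0 : (((A:ℚ)/2 - a : ℚ):ℂ) * ω^3 + (((B:ℚ)/2 - b:ℚ):ℂ) * ω^2
        + (((C:ℚ)/2 - c:ℚ):ℂ) * ω + (((D:ℚ)/2 - d:ℚ):ℂ) = 0 := by
      push_cast
      linear_combination he
    obtain ⟨h1, h2, h3, h4⟩ := lin_indep _ _ _ _ h0
    refine ⟨⟨a, ?_⟩, ⟨b, ?_⟩, ⟨c, ?_⟩, ⟨d, ?_⟩⟩
    · have : (A:ℚ) = 2 * a := by linarith
      exact_mod_cast this
    · have : (B:ℚ) = 2 * b := by linarith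
      exact_mod_cast this
    · have : (C:ℚ) = 2 * c := by linarith
      exact_mod_cast this
    · have : (D:ℚ) = 2 * d := by linarith
      exact_mod_cast this
  · rintro ⟨⟨a, ha⟩, ⟨b, hb⟩, ⟨c, hc⟩, ⟨d, hd⟩⟩
    exact ⟨a, b, c, d, by subst ha hb hc hd; push_cast; ring⟩

lemma conj_omega3 : (starRingEnd ℂ) (ω^3) = -ω := by
  rw [map_pow, conj_omega]
  linear_combination (-ω * (ω^4 - 1)) * omega_pow4

lemma norm_formula (a b c d : ℤ) :
    (starRingEnd ℂ) ((a:ℂ) * ω^3 + (b:ℂ) * ω^2 + (c:ℂ) * ω + (d:ℂ))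
      * ((a:ℂ) * ω^3 + (b:ℂ) * ω^2 + (c:ℂ) * ω + (d:ℂ))
    = ((-(a*b+b*c+c*d-a*d) : ℤ):ℂ) * ω^3 + ((0:ℤ):ℂ) * ω^2
      + (((a*b+b*c+c*d-a*d) : ℤ):ℂ) * ω + (((a^2+b^2+c^2+d^2) : ℤ):ℂ) := by
  have hc : (starRingEnd ℂ) ((a:ℂ) * ω^3 + (b:ℂ) * ω^2 + (c:ℂ) * ω + (d:ℂ))
      = -(a:ℂ) * ω - (b:ℂ) * ω^2 - (c:ℂ) * ω^3 + (d:ℂ) := by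
    simp only [map_add, map_mul, map_intCast, map_pow, conj_omega]
    linear_combination ((-(a:ℂ)) * ω * (ω^4 - 1) + (b:ℂ) * ω^2) * omega_pow4
  rw [hc]
  push_cast
  linear_combination ((-((a:ℂ)^2 + (b:ℂ)^2 + (c:ℂ)^2))
    - ((a:ℂ)*(b:ℂ) + (b:ℂ)*(c:ℂ)) * ω - (a:ℂ)*(c:ℂ) * ω^2) * omega_pow4

lemma z2_key : ∀ a b c d : ZMod 2,
    ¬(a^2+b^2+c^2+d^2 = 1 ∧ a*b+b*c+c*d-a*d = 1) := by decide

lemma int_cast_zmod2_even {k : ℤ} (h : Even k) : (k : ZMod 2) = 0 := by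
  rcases h with ⟨m, hm⟩; subst hm; push_cast
  rw [show ((m:ZMod 2) + m) = 2 * m by ring]
  rw [show (2:ZMod 2) = 0 from rfl]; ring

lemma int_cast_zmod2_odd {k : ℤ} (h : Odd k) : (k : ZMod 2) = 1 := by
  rcases h with ⟨m, hm⟩; subst hm; push_cast
  rw [show ((2:ZMod 2) * m + 1) = 2 * m + 1 by ring]
  simp [show (2:ZMod 2) = 0 from rfl]

lemma parity_key (a b c d : ℤ) :
    ¬(Odd (a^2+b^2+c^2+d^2) ∧ Odd (a*b+b*c+c*d-a*d)) := by
  rintro ⟨h1, h2⟩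
  apply z2_key (a : ZMod 2) b c d
  constructor
  · have := int_cast_zmod2_odd h1; push_cast at this; exact this
  · have := int_cast_zmod2_odd h2; push_cast at this; exact this

lemma even_card_odd (n : ℕ) (f : Fin n → ℤ) (h : Even (∑ j, f j)) :
    Even {j | Odd (f j)}.ncard := by
  classical
  set s := Finset.univ.filter (fun j : Fin n => Odd (f j)) with hs
  have hset : {j : Fin n | Odd (f j)} = (s : Set (Fin n)) := by
    ext j; simp [hs]
  rw [hset, Set.ncard_coe_finset]
  have h0 : ((∑ j, f j : ℤ) : ZMod 2) = 0 := int_cast_zmod2_even h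
  push_cast at h0
  have hsplit : (∑ j, ((f j : ℤ) : ZMod 2)) = (s.card : ZMod 2) := by
    rw [← Finset.sum_filter_add_sum_filter_not Finset.univ (fun j => Odd (f j))]
    have e1 : ∑ j ∈ s, ((f j : ℤ) : ZMod 2) = ∑ j ∈ s, (1 : ZMod 2) := by
      apply Finset.sum_congr rfl
      intro j hj
      simp [hs] at hj
      exact int_cast_zmod2_odd hj
    have e2 : ∑ j ∈ Finset.univ.filter (fun j => ¬ Odd (f j)), ((f j : ℤ) : ZMod 2) = 0 := by
      apply Finset.sum_eq_zero
      intro j hj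
      simp at hj
      exact int_cast_zmod2_even hj
    rw [← hs, e1, e2, Finset.sum_const, add_zero]
    simp
  rw [hsplit] at h0
  have : (2 : ℕ) ∣ s.card := (ZMod.natCast_eq_zero_iff _ _).mp h0
  exact even_iff_two_dvd.mpr this

/-- If `x₁, …, x_n ∈ ℤ[ω]` satisfy `x̄₁x₁ + ⋯ + x̄ₙxₙ ≡ 0 (mod 2)`, then the number of
indices `j` with `x̄_j x_j ≡ 1 (mod 2)` is even, and the number of indices `j` with
`x̄_j x_j ≡ ω + ω³ (mod 2)` is even. -/
theorem stmt14 (n : ℕ) (x : Fin n → ℂ) (hx : ∀ j, inZω (x j))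
    (h : inZω ((∑ j, (starRingEnd ℂ) (x j) * x j) / 2)) :
    Even {j : Fin n | inZω (((starRingEnd ℂ) (x j) * x j - 1) / 2)}.ncard ∧
    Even {j : Fin n | inZω (((starRingEnd ℂ) (x j) * x j - (ω + ω ^ 3)) / 2)}.ncard := by
  choose a b c d hxe using hx
  set M : Fin n → ℤ := fun j => a j * b j + b j * c j + c j * d j - a j * d j with hM
  set N : Fin n → ℤ := fun j => (a j)^2 + (b j)^2 + (c j)^2 + (d j)^2 with hN
  clear_value M N
  have hnorm : ∀ j, (starRingEnd ℂ) (x j) * x j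
      = ((-M j : ℤ):ℂ) * ω^3 + ((0:ℤ):ℂ) * ω^2 + ((M j : ℤ):ℂ) * ω + ((N j : ℤ):ℂ) := by
    intro j
    simp only [hM, hN]
    rw [hxe j, norm_formula]
  -- decode the hypothesis
  have hsum : (∑ j, (starRingEnd ℂ) (x j) * x j)
      = ((-(∑ j, M j) : ℤ):ℂ) * ω^3 + ((0:ℤ):ℂ) * ω^2
        + (((∑ j, M j) : ℤ):ℂ) * ω + (((∑ j, N j) : ℤ):ℂ) := by
    rw [Finset.sum_congr rfl (fun j _ => hnorm j),
      Finset.sum_add_distrib, Finset.sum_add_distrib, Finset.sum_add_distrib,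
      ← Finset.sum_mul, ← Finset.sum_mul, ← Finset.sum_mul]
    push_cast
    rw [Finset.sum_neg_distrib, Finset.sum_const, smul_zero]
  rw [hsum, decode_iff] at h
  obtain ⟨-, -, hMsum, hNsum⟩ := h
  have key : ∀ j, ¬(Odd (N j) ∧ Odd (M j)) := fun j => by
    rw [hM, hN]; exact parity_key (a j) (b j) (c j) (d j)
  constructor
  · have hset : {j : Fin n | inZω (((starRingEnd ℂ) (x j) * x j - 1) / 2)}
        = {j : Fin n | Odd (N j)} := by
      ext j
      simp only [Set.mem_setOf_eq]
      rw [show (starRingEnd ℂ) (x j) * x j - 1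
          = ((-M j : ℤ):ℂ) * ω^3 + ((0:ℤ):ℂ) * ω^2 + ((M j : ℤ):ℂ) * ω + ((N j - 1 : ℤ):ℂ) by
        rw [hnorm j]; push_cast; ring]
      rw [decode_iff]
      constructor
      · rintro ⟨-, -, -, ⟨k, hk⟩⟩
        exact ⟨k, by omega⟩
      · intro hodd
        have hMe : Even (M j) := by
          by_contra hc
          exact key j ⟨hodd, Int.not_even_iff_odd.mp hc⟩
        obtain ⟨m, hm⟩ := hMe
        obtain ⟨k, hk⟩ := hodd
        exact ⟨⟨-m, by omega⟩, ⟨0, by ring⟩, ⟨m, by omega⟩, ⟨k, by omega⟩⟩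
    rw [hset]
    obtain ⟨k, hk⟩ := hNsum
    exact even_card_odd n N ⟨k, by omega⟩
  · have hset : {j : Fin n | inZω (((starRingEnd ℂ) (x j) * x j - (ω + ω ^ 3)) / 2)}
        = {j : Fin n | Odd (M j)} := by
      ext j
      simp only [Set.mem_setOf_eq]
      rw [show (starRingEnd ℂ) (x j) * x j - (ω + ω ^ 3)
          = ((-M j - 1 : ℤ):ℂ) * ω^3 + ((0:ℤ):ℂ) * ω^2
            + ((M j - 1 : ℤ):ℂ) * ω + ((N j : ℤ):ℂ) by
        rw [hnorm j]; push_cast; ring]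
      rw [decode_iff]
      constructor
      · rintro ⟨-, -, ⟨k, hk⟩, -⟩
        exact ⟨k, by omega⟩
      · intro hodd
        have hNe : Even (N j) := by
          by_contra hc
          exact key j ⟨Int.not_even_iff_odd.mp hc, hodd⟩
        obtain ⟨m, hm⟩ := hNe
        obtain ⟨k, hk⟩ := hodd
        exact ⟨⟨-k - 1, by omega⟩, ⟨0, by ring⟩, ⟨k, by omega⟩, ⟨m, by omega⟩⟩
    rw [hset]
    obtain ⟨k, hk⟩ := hMsum
    exact even_card_odd n M ⟨k, by omega⟩
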